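/- If cvg(t', t) and t' ≠ t, then t' contains at least one input event that does not occur in t at the corresponding converging position; more precisely, the multiset of elements of t' minus those of t consists only of input events. -/

import Mathlib

inductive Cvg {σ : Type*} (inputs : Set σ) (inT : List σ → Set σ) :
    List σ → List σ → Prop
  | refl (t : List σ) : Cvg inputs inT t t
  | step (t₁ t₃ t : List σ) (ne : σ) (h₁ : t₁ <+: t) (h₂ : ne ∈ inputs)
      (h₃ : ne ∉ inT t₁) (h : Cvg inputs inT (t₁ ++ t₃) t) :
      Cvg inputs inT (t₁ ++ [ne] ++ t₃) t

/-- If `cvg(t', t)` and `t' ≠ t`, every event occurring strictly more often in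
`t'` than in `t` is an input event. -/
theorem cvg_diff_inputs {σ : Type*} [DecidableEq σ] (inputs : Set σ)
    (inT : List σ → Set σ) (t' t : List σ) (h : Cvg inputs inT t' t)
    (hne : t' ≠ t) :
    ∀ e : σ, t.count e < t'.count e → e ∈ inputs := by
  induction h with
  | refl t => exact absurd rfl hne
  | step t₁ t₃ t ne h₁ h₂ h₃ h ih =>
    intro e hcount
    by_cases he : e = ne
    · exact he ▸ h₂
    · simp [List.count_append, List.count_singleton, List.count_cons, he, Ne.symm he] at hcount
      by_cases heq : t₁ ++ t₃ = t
      · rw [← heq, List.count_append] at hcount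
        omega
      · exact ih heq e (by simp [List.count_append] at hcount ⊢; omega)
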